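/- Let G be a group and H a subgroup of G of finite index such that every element of G \ H has infinite order (in particular this holds when G is torsion-free and H is proper, or whenever G \ H contains no torsion element). Then G is icc if and only if H is icc. -/

import Mathlib

/-- A group is *icc* (with infinite conjugacy classes) if it is nontrivial and the
conjugacy class of every nontrivial element is infinite. -/
def IsICC (G : Type*) [Group G] : Prop :=
  Nontrivial G ∧ ∀ g : G, g ≠ 1 → {h : G | ∃ x : G, x⁻¹ * g * x = h}.Infinite

open Subgroup

lemma conj_infinite_iff {G : Type*} [Group G] (g : G) :
    {h : G | ∃ x : G, x⁻¹ * g * x = h}.Infinite ↔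
      (Subgroup.centralizer {g}).index = 0 := by
  set C := Subgroup.centralizer ({g} : Set G) with hC
  have key : ∀ x y : G, x * g * x⁻¹ = y * g * y⁻¹ ↔ x⁻¹ * y ∈ C := by
    intro x y
    rw [hC, Subgroup.mem_centralizer_iff]
    simp only [Set.mem_singleton_iff, forall_eq]
    constructor
    · intro hxy
      have := congrArg (fun z => x⁻¹ * z * y) hxy
      simpa [mul_assoc] using this
    · intro hxy
      have := congrArg (fun z => x * z * y⁻¹) hxy
      simpa [mul_assoc] using this
  have hset : {h : G | ∃ x : G, x⁻¹ * g * x = h} = Set.range (fun x : G => x * g * x⁻¹) := by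
    ext h
    constructor
    · rintro ⟨x, rfl⟩; exact ⟨x⁻¹, by group⟩
    · rintro ⟨x, rfl⟩; exact ⟨x⁻¹, by group⟩
  let f : G ⧸ C → G := Quotient.lift (fun x : G => x * g * x⁻¹)
    (fun a b h => (key a b).2 (QuotientGroup.leftRel_apply.mp h))
  have hfmk : ∀ x : G, f (x : G ⧸ C) = x * g * x⁻¹ := fun x => rfl
  have hrange : Set.range f = Set.range (fun x : G => x * g * x⁻¹) := by
    ext h
    constructor
    · rintro ⟨q, rfl⟩
      obtain ⟨x, rfl⟩ := QuotientGroup.mk_surjective q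
      exact ⟨x, rfl⟩
    · rintro ⟨x, rfl⟩
      exact ⟨(x : G ⧸ C), rfl⟩
  have hinj : Function.Injective f := by
    intro a b hab
    obtain ⟨x, rfl⟩ := QuotientGroup.mk_surjective a
    obtain ⟨y, rfl⟩ := QuotientGroup.mk_surjective b
    rw [hfmk, hfmk] at hab
    exact (QuotientGroup.eq).2 ((key x y).1 hab)
  rw [hset, ← hrange, Set.infinite_range_iff hinj, Subgroup.index,
    Nat.card_eq_zero]
  have : Nonempty (G ⧸ C) := ⟨(1 : G)⟩
  simp [not_isEmpty_of_nonempty]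

lemma index_zero_transfer {G : Type*} [Group G] (K H : Subgroup G) (hH : H.index ≠ 0) :
    K.index = 0 ↔ (K.subgroupOf H).index = 0 := by
  have hrel : (K.subgroupOf H).index = K.relIndex H := rfl
  rw [hrel]
  constructor
  · intro hK
    by_contra hne
    have h1 : (K ⊓ H).relIndex H * H.index = (K ⊓ H).index :=
      Subgroup.relIndex_mul_index inf_le_right
    rw [Subgroup.inf_relIndex_right] at h1
    have h2 : (K ⊓ H).index ≠ 0 := h1 ▸ mul_ne_zero hne hH
    exact h2 (eq_zero_of_zero_dvd (hK ▸ Subgroup.index_dvd_of_le inf_le_left))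
  · exact Subgroup.index_eq_zero_of_relIndex_eq_zero

lemma centralizer_subgroupOf {G : Type*} [Group G] (H : Subgroup G) (h : H) :
    Subgroup.centralizer ({h} : Set H) = (Subgroup.centralizer {(h : G)}).subgroupOf H := by
  ext x
  simp only [Subgroup.mem_centralizer_iff, Subgroup.mem_subgroupOf, Set.mem_singleton_iff,
    forall_eq]
  constructor
  · intro hx
    exact_mod_cast congrArg (Subtype.val) hx
  · intro hx
    ext
    exact_mod_cast hx

lemma bridge {G : Type*} [Group G] (H : Subgroup G) (hH : H.index ≠ 0) (h : H) :
    {k : H | ∃ x : H, x⁻¹ * h * x = k}.Infinite ↔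
      {k : G | ∃ x : G, x⁻¹ * (h : G) * x = k}.Infinite := by
  rw [conj_infinite_iff, conj_infinite_iff, centralizer_subgroupOf,
    ← index_zero_transfer _ _ hH]

/-- Corollary 2: if every element of G \ H has infinite order, then G is icc iff H is. -/
theorem stmt_12 {G : Type*} [Group G] (H : Subgroup G) [H.FiniteIndex]
    (htor : ∀ g : G, g ∉ H → ¬ IsOfFinOrder g) :
    IsICC G ↔ IsICC H := by
  have hidx : H.index ≠ 0 := Subgroup.FiniteIndex.index_ne_zero
  constructor
  · rintro ⟨hnt, hcl⟩
    have hGinf : Infinite G := by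
      obtain ⟨g, hg⟩ := exists_ne (1 : G)
      rw [← Set.infinite_univ_iff]
      exact ((hcl g hg).mono (Set.subset_univ _))
    have hHinf : Infinite H := by
      have hcards : Nat.card H * H.index = Nat.card G := H.card_mul_index
      rw [Nat.card_eq_zero_of_infinite (α := G)] at hcards
      have : Nat.card H = 0 := by
        rcases Nat.mul_eq_zero.mp hcards with h | h
        · exact h
        · exact absurd h hidx
      rcases Nat.card_eq_zero.mp this with h | h
      · exact absurd (⟨1⟩ : Nonempty H) (not_nonempty_iff.mpr h)
      · exact h
    refine ⟨inferInstance, fun h hne => ?_⟩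
    have hcoe : (h : G) ≠ 1 := by
      simpa using hne
    exact (bridge H hidx h).mpr (hcl _ hcoe)
  · rintro ⟨hnt, hcl⟩
    have hGnt : Nontrivial G := by
      obtain ⟨h, hh⟩ := exists_ne (1 : H)
      exact ⟨(h : G), 1, by simpa using hh⟩
    refine ⟨hGnt, fun g hg => ?_⟩
    by_cases hmem : g ∈ H
    · exact (bridge H hidx ⟨g, hmem⟩).mp
        (hcl ⟨g, hmem⟩ (by simpa using hg))
    · obtain ⟨n, hn0, -, hnm⟩ := Subgroup.exists_pow_mem_of_index_ne_zero hidx g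
      have hgn : g ^ n ≠ 1 := fun h =>
        htor g hmem (isOfFinOrder_iff_pow_eq_one.mpr ⟨n, hn0, h⟩)
      have hcln : {k : G | ∃ x : G, x⁻¹ * (g ^ n) * x = k}.Infinite :=
        (bridge H hidx ⟨g ^ n, hnm⟩).mp
          (hcl ⟨g ^ n, hnm⟩ (by simpa using hgn))
      rw [conj_infinite_iff] at hcln ⊢
      have hle : Subgroup.centralizer ({g} : Set G) ≤ Subgroup.centralizer {g ^ n} := by
        intro x hx
        rw [Subgroup.mem_centralizer_iff] at hx ⊢
        simp only [Set.mem_singleton_iff, forall_eq] at hx ⊢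
        exact (Commute.pow_left hx n)
      exact zero_dvd_iff.mp (hcln ▸ Subgroup.index_dvd_of_le hle)
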